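/- Let c ∈ (0,1) and define m(ρ) = −2 / (1 − c − ρ − √((1 − c + ρ)² + 4cρ)) for ρ > 0. Then m is differentiable on (0, ∞), and the function f̄(ρ) = m(ρ) + ρ·m′(ρ) is strictly positive and strictly decreasing on (0, ∞). Consequently, for any γ, P_a > 0 the equation γ·f̄(ρ) = P_a has at most one solution ρ > 0. -/

import Mathlib

/-- The Marchenko–Pastur-type Stieltjes function
`m(ρ) = −2 / (1 − c − ρ − √((1 − c + ρ)² + 4cρ))`. -/
noncomputable def mMP (c ρ : ℝ) : ℝ :=
  -2 / (1 - c - ρ - Real.sqrt ((1 - c + ρ) ^ 2 + 4 * c * ρ))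

/-- The deterministic-equivalent power profile `f̄(ρ) = m(ρ) + ρ m′(ρ)`. -/
noncomputable def fBar (c ρ : ℝ) : ℝ := mMP c ρ + ρ * deriv (mMP c) ρ

noncomputable def sQ (c ρ : ℝ) : ℝ := Real.sqrt ((1 - c + ρ) ^ 2 + 4 * c * ρ)

lemma hq_pos {c ρ : ℝ} (hc0 : 0 < c) (hρ : 0 < ρ) :
    0 < (1 - c + ρ) ^ 2 + 4 * c * ρ := by positivity

lemma hs_pos {c ρ : ℝ} (hc0 : 0 < c) (hρ : 0 < ρ) : 0 < sQ c ρ :=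
  Real.sqrt_pos.2 (hq_pos hc0 hρ)

lemma hs_sq {c ρ : ℝ} (hc0 : 0 < c) (hρ : 0 < ρ) :
    (sQ c ρ) ^ 2 = (1 - c + ρ) ^ 2 + 4 * c * ρ :=
  Real.sq_sqrt (hq_pos hc0 hρ).le

lemma hs_lt {c ρ : ℝ} (hc0 : 0 < c) (hc1 : c < 1) (hρ : 0 < ρ) :
    1 - c + ρ < sQ c ρ := by
  have h1 := hs_sq hc0 hρ (c := c) (ρ := ρ)
  have h2 := hs_pos hc0 hρ (c := c) (ρ := ρ)
  nlinarith

lemma hs_ub {c ρ : ℝ} (hc0 : 0 < c) (hρ : 0 < ρ) : sQ c ρ < 1 + c + ρ := by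
  have h1 := hs_sq hc0 hρ (c := c) (ρ := ρ)
  have h2 := hs_pos hc0 hρ (c := c) (ρ := ρ)
  nlinarith

lemma hD_neg {c ρ : ℝ} (hc0 : 0 < c) (hc1 : c < 1) (hρ : 0 < ρ) :
    1 - c - ρ - sQ c ρ < 0 := by
  have := hs_lt hc0 hc1 hρ; linarith

lemma hasDerivAt_sQ {c ρ : ℝ} (hc0 : 0 < c) (hρ : 0 < ρ) :
    HasDerivAt (sQ c) ((1 + c + ρ) / sQ c ρ) ρ := by
  have hin : HasDerivAt (fun x : ℝ => (1 - c + x) ^ 2 + 4 * c * x)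
      (2 * (1 - c + ρ) + 4 * c) ρ := by
    have h1 : HasDerivAt (fun x : ℝ => 1 - c + x) 1 ρ := (hasDerivAt_id ρ).const_add _
    have h2 := (h1.pow 2).add ((hasDerivAt_id ρ).const_mul (4 * c))
    exact h2.congr_deriv (by norm_num)
  have h3 := (Real.hasDerivAt_sqrt (ne_of_gt (hq_pos hc0 hρ))).comp ρ hin
  refine h3.congr_deriv (Eq.symm ?_)
  have hs0 := hs_pos hc0 hρ (c := c) (ρ := ρ)
  have : Real.sqrt ((1 - c + ρ) ^ 2 + 4 * c * ρ) = sQ c ρ := rfl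
  rw [this]
  rw [div_eq_iff (ne_of_gt hs0)]
  field_simp
  ring

lemma mMP_eq {c ρ : ℝ} (hc0 : 0 < c) (hc1 : c < 1) (hρ : 0 < ρ) :
    mMP c ρ = (sQ c ρ + 1 - c - ρ) / (2 * ρ) := by
  have hD := hD_neg hc0 hc1 hρ
  have hsq := hs_sq hc0 hρ (c := c) (ρ := ρ)
  rw [mMP, show Real.sqrt ((1 - c + ρ) ^ 2 + 4 * c * ρ) = sQ c ρ from rfl]
  rw [div_eq_div_iff (by linarith) (by linarith)]
  nlinarith [hsq]

lemma hasDerivAt_mMP {c ρ : ℝ} (hc0 : 0 < c) (hc1 : c < 1) (hρ : 0 < ρ) :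
    HasDerivAt (mMP c)
      ((((1 + c + ρ) / sQ c ρ - 1) * (2 * ρ) - (sQ c ρ + 1 - c - ρ) * 2) / (2 * ρ) ^ 2) ρ := by
  have hN : HasDerivAt (fun x => sQ c x + 1 - c - x) ((1 + c + ρ) / sQ c ρ - 1) ρ := by
    have h := ((hasDerivAt_sQ hc0 hρ).add_const (1 - c)).sub (hasDerivAt_id ρ)
    simp only [Pi.sub_def, id_eq] at h
    refine h.congr_of_eventuallyEq (Filter.Eventually.of_forall fun x => ?_)
    ring
  have hDen : HasDerivAt (fun x : ℝ => 2 * x) 2 ρ := by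
    simpa using (hasDerivAt_id ρ).const_mul 2
  have hg := hN.div hDen (by positivity)
  have heq : mMP c =ᶠ[nhds ρ] fun x => (sQ c x + 1 - c - x) / (2 * x) := by
    filter_upwards [Ioi_mem_nhds hρ] with x hx
    exact mMP_eq hc0 hc1 hx
  exact hg.congr_of_eventuallyEq heq

lemma fBar_eq {c ρ : ℝ} (hc0 : 0 < c) (hc1 : c < 1) (hρ : 0 < ρ) :
    fBar c ρ = 2 * c / (sQ c ρ * (sQ c ρ + 1 + c + ρ)) := by
  have hd := (hasDerivAt_mMP hc0 hc1 hρ).deriv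
  have hs0 := hs_pos hc0 hρ (c := c) (ρ := ρ)
  have hsq := hs_sq hc0 hρ (c := c) (ρ := ρ)
  have hsum : 0 < sQ c ρ + 1 + c + ρ := by linarith
  rw [fBar, hd, mMP_eq hc0 hc1 hρ]
  have step1 : (sQ c ρ + 1 - c - ρ) / (2 * ρ) +
      ρ * ((((1 + c + ρ) / sQ c ρ - 1) * (2 * ρ) - (sQ c ρ + 1 - c - ρ) * 2) / (2 * ρ) ^ 2)
      = ((1 + c + ρ) / sQ c ρ - 1) / 2 := by
    field_simp
    ring
  rw [step1, div_eq_div_iff (by norm_num) (by positivity)]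
  field_simp
  nlinarith [hsq]

theorem stmt7 (c : ℝ) (hc0 : 0 < c) (hc1 : c < 1) :
    DifferentiableOn ℝ (mMP c) (Set.Ioi 0) ∧
    (∀ ρ ∈ Set.Ioi (0 : ℝ), 0 < fBar c ρ) ∧
    StrictAntiOn (fBar c) (Set.Ioi 0) ∧
    ∀ γ Pa : ℝ, 0 < γ → 0 < Pa →
      ∀ ρ₁ ∈ Set.Ioi (0 : ℝ), ∀ ρ₂ ∈ Set.Ioi (0 : ℝ),
        γ * fBar c ρ₁ = Pa → γ * fBar c ρ₂ = Pa → ρ₁ = ρ₂ := by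
  have hdiff : DifferentiableOn ℝ (mMP c) (Set.Ioi 0) := fun x hx =>
    ((hasDerivAt_mMP hc0 hc1 (Set.mem_Ioi.1 hx)).differentiableAt).differentiableWithinAt
  have hpos : ∀ ρ ∈ Set.Ioi (0 : ℝ), 0 < fBar c ρ := by
    intro ρ hρ
    have hρ' : (0:ℝ) < ρ := hρ
    rw [fBar_eq hc0 hc1 hρ']
    have hs0 := hs_pos hc0 hρ' (c := c) (ρ := ρ)
    have hsum : 0 < sQ c ρ + 1 + c + ρ := by linarith
    positivity
  have hanti : StrictAntiOn (fBar c) (Set.Ioi 0) := by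
    intro ρ₁ h1 ρ₂ h2 hlt
    have h1' : (0:ℝ) < ρ₁ := h1
    have h2' : (0:ℝ) < ρ₂ := h2
    rw [fBar_eq hc0 hc1 h1', fBar_eq hc0 hc1 h2']
    have hs1 := hs_pos hc0 h1' (c := c) (ρ := ρ₁)
    have hs2 := hs_pos hc0 h2' (c := c) (ρ := ρ₂)
    have hqlt : (1 - c + ρ₁) ^ 2 + 4 * c * ρ₁ < (1 - c + ρ₂) ^ 2 + 4 * c * ρ₂ := by
      nlinarith
    have hslt : sQ c ρ₁ < sQ c ρ₂ :=
      Real.sqrt_lt_sqrt (hq_pos hc0 h1').le hqlt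
    have hden : sQ c ρ₁ * (sQ c ρ₁ + 1 + c + ρ₁) < sQ c ρ₂ * (sQ c ρ₂ + 1 + c + ρ₂) := by
      nlinarith
    exact div_lt_div_of_pos_left (by linarith) (by nlinarith) hden
  refine ⟨hdiff, hpos, hanti, ?_⟩
  intro γ Pa hγ hPa ρ₁ h1 ρ₂ h2 e1 e2
  have hf : fBar c ρ₁ = fBar c ρ₂ := by
    have h : γ * fBar c ρ₁ = γ * fBar c ρ₂ := by rw [e1, e2]
    exact mul_left_cancel₀ (ne_of_gt hγ) h
  exact hanti.injOn h1 h2 hf
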